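/- arXiv:2406.09955 — 3 statements merged into one kernel-verified Lean document; each statement's English description precedes it below -/
import Mathlib

section
/- Let Q be a bounded sublinear rate operator on ℬ, and for each t ≥ 0 let e^{tQ} denote the limit in operator seminorm of the sequence ((I + (t/n)Q)^n)_{n∈ℕ}. Then (e^{tQ})_{t≥0} is a uniformly continuous semigroup of sublinear transition operators: e^{0Q} = I, e^{(s+t)Q} = e^{sQ} ∘ e^{tQ} for all s, t ≥ 0, each e^{tQ} is a sublinear transition operator, and ‖e^{sQ} − e^{tQ}‖ → 0 as s → t for every t ≥ 0. -/
open Filter Topology BoundedContinuousFunction ENNReal NNReal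

/-- The space of (possibly nonlinear) operators on the Banach space `X →ᵇ ℝ`
of bounded (continuous, i.e. with `X` discrete: all) real-valued functions. -/
abbrev Op (X : Type*) [TopologicalSpace X] :=
  BoundedContinuousFunction X ℝ → BoundedContinuousFunction X ℝ

/-- The operator seminorm `‖A‖ = sup {‖A f‖/‖f‖ : f ≠ 0}`, a value in `[0,∞]`. -/
noncomputable def opSemiNorm {X : Type*} [TopologicalSpace X] (A : Op X) : ℝ≥0∞ :=
  ⨆ (f : BoundedContinuousFunction X ℝ) (_ : f ≠ 0), (‖A f‖₊ : ℝ≥0∞) / (‖f‖₊ : ℝ≥0∞)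

/-- The operator norm distance `d(A,B) = ‖A 0 − B 0‖∞ + ‖A − B‖`. -/
noncomputable def opDist {X : Type*} [TopologicalSpace X] (A B : Op X) : ℝ≥0∞ :=
  (‖A 0 - B 0‖₊ : ℝ≥0∞) + opSemiNorm (A - B)

/-- Sublinear transition operator: (T1) positive homogeneity, (T2) subadditivity,
(T3) `T f ≤ sup f` pointwise. -/
def IsSublinearTransition {X : Type*} [TopologicalSpace X] (T : Op X) : Prop :=
  (∀ (c : ℝ), 0 ≤ c → ∀ f, T (c • f) = c • T f) ∧
  (∀ f g, ∀ x, T (f + g) x ≤ T f x + T g x) ∧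
  (∀ f, ∀ x, T f x ≤ ⨆ y, f y)

/-- Sublinear rate operator: (Q1) positive homogeneity, (Q2) subadditivity,
(Q3) constants map to zero, (Q4) positive maximum principle. -/
def IsSublinearRate {X : Type*} [TopologicalSpace X] (Q : Op X) : Prop :=
  (∀ (c : ℝ), 0 ≤ c → ∀ f, Q (c • f) = c • Q f) ∧
  (∀ f g, ∀ x, Q (f + g) x ≤ Q f x + Q g x) ∧
  (∀ (c : ℝ), Q (BoundedContinuousFunction.const X c) = 0) ∧
  (∀ f, ∀ x : X, (⨆ y, f y) = f x → 0 ≤ f x → Q f x ≤ 0)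

/-- The Euler approximation `(I + (t/n) Q)^n` (n-fold composition). -/
noncomputable def euler {X : Type*} [TopologicalSpace X] (Q : Op X) (t : ℝ) (n : ℕ) : Op X :=
  (fun f => f + (t / (n : ℝ)) • Q f)^[n]

/-- Uniform continuity of a semigroup `(S_t)_{t ≥ 0}`:
`‖S_s − S_t‖ → 0` as `s → t` (within `s ≥ 0`), for every `t ≥ 0`. -/
def IsUniformlyContinuousSG {X : Type*} [TopologicalSpace X] (S : ℝ → Op X) : Prop :=
  ∀ t : ℝ, 0 ≤ t →
    Tendsto (fun s => opSemiNorm (S s - S t)) (nhdsWithin t (Set.Ici 0)) (nhds 0)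

/-- The indicator function `1_x` of the singleton `{x}`. -/
noncomputable def indic {X : Type*} [TopologicalSpace X] [DiscreteTopology X] (x : X) :
    BoundedContinuousFunction X ℝ :=
  BoundedContinuousFunction.ofNormedAddCommGroup
    (Set.indicator {x} (fun _ => (1 : ℝ))) continuous_of_discreteTopology 1
    (by
      intro y
      classical
      rw [Set.indicator_apply]
      split_ifs <;> simp)

/-- Downward continuity (continuity from above) of an operator. -/
def DownwardContinuous {X : Type*} [TopologicalSpace X] (A : Op X) : Prop :=
  ∀ (f : ℕ → BoundedContinuousFunction X ℝ) (g : BoundedContinuousFunction X ℝ),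
    (∀ n x, f (n + 1) x ≤ f n x) →
    (∀ x, Tendsto (fun n => f n x) atTop (nhds (g x))) →
    ∀ x, Tendsto (fun n => A (f n) x) atTop (nhds (A g x))

section AuxDev
variable {X : Type*} [TopologicalSpace X]

/-- The Lipschitz/norm constant of `Q`. -/
noncomputable def qC (Q : Op X) : ℝ := (opSemiNorm Q).toReal

lemma qC_nonneg (Q : Op X) : 0 ≤ qC Q := ENNReal.toReal_nonneg

lemma bddAbove_range' (f : BoundedContinuousFunction X ℝ) : BddAbove (Set.range f) := by
  refine ⟨‖f‖, ?_⟩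
  rintro _ ⟨y, rfl⟩
  exact (le_abs_self _).trans ((Real.norm_eq_abs _).symm.le.trans (f.norm_coe_le_norm y))

lemma apply_le_sup' (f : BoundedContinuousFunction X ℝ) (x : X) : f x ≤ ⨆ y, f y :=
  le_ciSup (bddAbove_range' f) x

lemma sup_le_norm' (f : BoundedContinuousFunction X ℝ) (x : X) : (⨆ y, f y) ≤ ‖f‖ := by
  have : Nonempty X := ⟨x⟩
  exact ciSup_le fun y => (le_abs_self _).trans ((Real.norm_eq_abs _).symm.le.trans (f.norm_coe_le_norm y))

lemma sup_nonpos' (f : BoundedContinuousFunction X ℝ) (x : X) (h : ∀ y, f y ≤ 0) :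
    (⨆ y, f y) ≤ 0 := by
  have : Nonempty X := ⟨x⟩
  exact ciSup_le h

variable {Q : Op X}

lemma Q_zero (hQ : IsSublinearRate Q) : Q 0 = 0 := by
  have := hQ.1 0 le_rfl 0
  simpa using this

lemma Q_norm_le (hQ : IsSublinearRate Q) (hQb : opSemiNorm Q ≠ ⊤) (f : BoundedContinuousFunction X ℝ) :
    ‖Q f‖ ≤ qC Q * ‖f‖ := by
  rcases eq_or_ne f 0 with rfl | hf
  · simp [Q_zero hQ, qC_nonneg]
  · have h1 : (‖Q f‖₊ : ℝ≥0∞) / ‖f‖₊ ≤ opSemiNorm Q :=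
      le_iSup₂ (f := fun (g : BoundedContinuousFunction X ℝ) (_ : g ≠ 0) => (‖Q g‖₊ : ℝ≥0∞) / ‖g‖₊) f hf
    have hfn : (‖f‖₊ : ℝ≥0∞) ≠ 0 := by simpa using hf
    have h2 : (‖Q f‖₊ : ℝ≥0∞) ≤ opSemiNorm Q * ‖f‖₊ :=
      (ENNReal.div_le_iff hfn (by simp)).mp h1
    have h3 := ENNReal.toReal_mono (by exact ENNReal.mul_ne_top hQb (by simp)) h2
    rw [ENNReal.toReal_mul] at h3
    simpa [qC] using h3

lemma Q_sub_le (hQ : IsSublinearRate Q) (f g : BoundedContinuousFunction X ℝ) (x : X) :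
    Q f x - Q g x ≤ Q (f - g) x := by
  have h := hQ.2.1 (f - g) g x
  rw [sub_add_cancel] at h
  linarith

lemma Q_posmax [DiscreteTopology X] (hQ : IsSublinearRate Q) (hQb : opSemiNorm Q ≠ ⊤)
    (f : BoundedContinuousFunction X ℝ) (x : X) :
    Q f x ≤ qC Q * ((⨆ y, f y) - f x) := by
  classical
  set M := ⨆ y, f y with hM
  set d := M - f x with hd
  have hd0 : 0 ≤ d := sub_nonneg.2 (apply_le_sup' f x)
  set v := f - BoundedContinuousFunction.const X M + d • indic x with hv
  have hindx : (indic x : X → ℝ) x = 1 := by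
    simp [indic, Set.indicator_apply]
  have hind_le : ∀ y, (indic x : X → ℝ) y ≤ 1 := by
    intro y
    simp only [indic, BoundedContinuousFunction.coe_ofNormedAddCommGroup, Set.indicator_apply]
    split_ifs <;> norm_num
  have hind_nonneg : ∀ y, 0 ≤ (indic x : X → ℝ) y := by
    intro y
    simp only [indic, BoundedContinuousFunction.coe_ofNormedAddCommGroup, Set.indicator_apply]
    split_ifs <;> norm_num
  have hvx : v x = 0 := by
    simp [hv, hindx, hd]
  have hvle : ∀ y, v y ≤ 0 := by
    intro y
    rcases eq_or_ne y x with rfl | hyx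
    · exact le_of_eq hvx
    · have h1 : (indic x : X → ℝ) y = 0 := by
        simp only [indic, BoundedContinuousFunction.coe_ofNormedAddCommGroup, Set.indicator_apply]
        split_ifs with h
        · exact absurd h hyx
        · rfl
      have h2 : f y ≤ M := apply_le_sup' f y
      simp [hv, h1]
      linarith
  have hsupv : (⨆ y, v y) = v x := by
    refine le_antisymm ?_ (apply_le_sup' v x)
    rw [hvx]
    exact sup_nonpos' v x hvle
  have hQ4 : Q v x ≤ 0 := hQ.2.2.2 v x hsupv (hvx ▸ le_rfl)
  -- decomposition f = (v + const M) + (-(d • indic x))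
  have hdec : f = (v + BoundedContinuousFunction.const X M) + (-(d • indic x)) := by
    ext y
    simp [hv]
    ring
  have h1 : Q f x ≤ Q (v + BoundedContinuousFunction.const X M) x + Q (-(d • indic x)) x := by
    conv_lhs => rw [hdec]
    exact hQ.2.1 _ _ x
  have h2 : Q (v + BoundedContinuousFunction.const X M) x ≤ Q v x := by
    have := hQ.2.1 v (BoundedContinuousFunction.const X M) x
    rw [hQ.2.2.1 M] at this
    simpa using this
  have h3 : Q (-(d • indic x)) x ≤ qC Q * d := by
    have hno : ‖(-(d • indic x) : BoundedContinuousFunction X ℝ)‖ ≤ d := by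
      have h4 : ‖(d • indic x : BoundedContinuousFunction X ℝ)‖ = ‖d‖ * ‖indic x‖ :=
        norm_smul d (indic x)
      rw [norm_neg, h4, Real.norm_eq_abs, abs_of_nonneg hd0]
      have : ‖indic x‖ ≤ 1 :=
        BoundedContinuousFunction.norm_ofNormedAddCommGroup_le _ (by norm_num) _
      nlinarith
    have hb := Q_norm_le hQ hQb (-(d • indic x))
    have hc : Q (-(d • indic x)) x ≤ ‖Q (-(d • indic x))‖ :=
      (le_abs_self _).trans ((Real.norm_eq_abs _).symm.le.trans
        ((Q (-(d • indic x))).norm_coe_le_norm x))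
    have := qC_nonneg Q
    nlinarith
  linarith

end AuxDev
section AuxDev2
variable {X : Type*} [TopologicalSpace X] {Q : Op X}

/-- One Euler step. -/
noncomputable def step (Q : Op X) (h : ℝ) : Op X := fun f => f + h • Q f

lemma euler_eq (Q : Op X) (t : ℝ) (n : ℕ) : euler Q t n = (step Q (t / n))^[n] := rfl

/-- Nice operators: sublinear transition operators. -/
structure Nice (A : Op X) : Prop where
  zero : A 0 = 0
  homog : ∀ c : ℝ, 0 ≤ c → ∀ f, A (c • f) = c • A f
  subadd : ∀ f g x, A (f + g) x ≤ A f x + A g x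
  lesup : ∀ f (x : X), A f x ≤ ⨆ y, f y

namespace Nice

variable {A B : Op X}

lemma diff_le (hA : Nice A) (f g : BoundedContinuousFunction X ℝ) (x : X) :
    A f x - A g x ≤ A (f - g) x := by
  have h := hA.subadd (f - g) g x
  rw [sub_add_cancel] at h
  linarith

lemma mono (hA : Nice A) (f g : BoundedContinuousFunction X ℝ) (h : ∀ y, f y ≤ g y) (x : X) :
    A f x ≤ A g x := by
  have h1 := hA.diff_le f g x
  have h2 := hA.lesup (f - g) x
  have h3 : (⨆ y, (f - g) y) ≤ 0 := by
    refine sup_nonpos' _ x fun y => ?_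
    simp only [BoundedContinuousFunction.coe_sub, Pi.sub_apply]
    linarith [h y]
  linarith

lemma contr (hA : Nice A) (f g : BoundedContinuousFunction X ℝ) :
    ‖A f - A g‖ ≤ ‖f - g‖ := by
  rw [BoundedContinuousFunction.norm_le (norm_nonneg _)]
  intro x
  rw [Real.norm_eq_abs, abs_le]
  constructor
  · have h1 := hA.diff_le g f x
    have h2 := (hA.lesup (g - f) x).trans (sup_le_norm' _ x)
    have h3 : ‖g - f‖ = ‖f - g‖ := norm_sub_rev g f
    simp only [BoundedContinuousFunction.coe_sub, Pi.sub_apply]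
    linarith
  · have h1 := hA.diff_le f g x
    have h2 := (hA.lesup (f - g) x).trans (sup_le_norm' _ x)
    simp only [BoundedContinuousFunction.coe_sub, Pi.sub_apply]
    linarith

lemma norm_le' (hA : Nice A) (f : BoundedContinuousFunction X ℝ) : ‖A f‖ ≤ ‖f‖ := by
  have := hA.contr f 0
  simpa [hA.zero] using this

protected lemma id : Nice (fun f : BoundedContinuousFunction X ℝ => f) where
  zero := rfl
  homog _ _ _ := rfl
  subadd f g x := le_of_eq (by simp)
  lesup f x := apply_le_sup' f x

protected lemma comp (hA : Nice A) (hB : Nice B) : Nice (fun f => A (B f)) where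
  zero := by simp [hB.zero, hA.zero]
  homog c hc f := by rw [hB.homog c hc f, hA.homog c hc (B f)]
  subadd f g x := by
    have h1 : A (B (f + g)) x ≤ A (B f + B g) x := by
      refine hA.mono _ _ (fun y => ?_) x
      have := hB.subadd f g y
      simpa using this
    have h2 := hA.subadd (B f) (B g) x
    linarith
  lesup f x := by
    refine (hA.lesup (B f) x).trans ?_
    have : Nonempty X := ⟨x⟩
    exact ciSup_le fun y => hB.lesup f y

protected lemma iterate (hA : Nice A) (n : ℕ) : Nice (A^[n]) := by
  induction n with
  | zero => exact (Nice.id (X := X))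
  | succ n ih =>
    rw [Function.iterate_succ']
    exact hA.comp ih

end Nice

lemma step_nice [DiscreteTopology X] (hQ : IsSublinearRate Q) (hQb : opSemiNorm Q ≠ ⊤)
    {h : ℝ} (h0 : 0 ≤ h) (h1 : h * qC Q ≤ 1) : Nice (step Q h) where
  zero := by simp [step, Q_zero hQ]
  homog c hc f := by
    rw [step, step, hQ.1 c hc f, smul_add, smul_comm]
  subadd f g x := by
    have hs := hQ.2.1 f g x
    simp only [step, BoundedContinuousFunction.coe_add, Pi.add_apply,
      BoundedContinuousFunction.coe_smul, Pi.smul_apply, smul_eq_mul]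
    nlinarith
  lesup f x := by
    have hp := Q_posmax hQ hQb f x
    have hfx := apply_le_sup' f x
    have hC := qC_nonneg Q
    simp only [step, BoundedContinuousFunction.coe_add, Pi.add_apply,
      BoundedContinuousFunction.coe_smul, Pi.smul_apply, smul_eq_mul]
    nlinarith [mul_le_mul_of_nonneg_left hp h0,
      mul_nonneg (sub_nonneg.2 h1) (sub_nonneg.2 hfx)]

lemma euler_nice [DiscreteTopology X] (hQ : IsSublinearRate Q) (hQb : opSemiNorm Q ≠ ⊤)
    {t : ℝ} (ht : 0 ≤ t) {n : ℕ} (hn : t * qC Q ≤ n) : Nice (euler Q t n) := by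
  rw [euler_eq]
  refine Nice.iterate ?_ n
  rcases Nat.eq_zero_or_pos n with rfl | hn0
  · have h0 : t / ((0:ℕ):ℝ) = 0 := by simp
    rw [h0]
    exact step_nice hQ hQb le_rfl (by simpa using zero_le_one)
  · have hnpos : (0:ℝ) < n := by exact_mod_cast hn0
    refine step_nice hQ hQb (div_nonneg ht hnpos.le) ?_
    rw [div_mul_eq_mul_div, div_le_one hnpos]
    exact hn

lemma eventually_nice [DiscreteTopology X] (hQ : IsSublinearRate Q) (hQb : opSemiNorm Q ≠ ⊤)
    {t : ℝ} (ht : 0 ≤ t) : ∀ᶠ n : ℕ in atTop, Nice (euler Q t n) := by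
  filter_upwards [eventually_ge_atTop ⌈t * qC Q⌉₊] with n hn
  exact euler_nice hQ hQb ht (Nat.ceil_le.mp hn)

end AuxDev2
section AuxDev3
variable {X : Type*} [TopologicalSpace X] {Q : Op X}

lemma step_time (hQ : IsSublinearRate Q) (hQb : opSemiNorm Q ≠ ⊤) (h h' : ℝ)
    (f : BoundedContinuousFunction X ℝ) :
    ‖step Q h f - step Q h' f‖ ≤ |h - h'| * (qC Q * ‖f‖) := by
  have hQf := Q_norm_le hQ hQb f
  have hC := qC_nonneg Q
  rw [BoundedContinuousFunction.norm_le (mul_nonneg (abs_nonneg _) (mul_nonneg hC (norm_nonneg f)))]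
  intro x
  have hx : (step Q h f - step Q h' f) x = (h - h') * Q f x := by
    simp only [step, BoundedContinuousFunction.coe_sub, Pi.sub_apply,
      BoundedContinuousFunction.coe_add, Pi.add_apply,
      BoundedContinuousFunction.coe_smul, Pi.smul_apply, smul_eq_mul]
    ring
  rw [hx, Real.norm_eq_abs, abs_mul]
  have h5 : |Q f x| ≤ ‖Q f‖ := (Real.norm_eq_abs _).symm.le.trans ((Q f).norm_coe_le_norm x)
  nlinarith [abs_nonneg (h - h'), abs_nonneg (Q f x)]

lemma iterate_time (hQ : IsSublinearRate Q) (hQb : opSemiNorm Q ≠ ⊤) {h h' : ℝ}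
    (hh : Nice (step Q h)) (hh' : Nice (step Q h')) (n : ℕ) :
    ∀ f, ‖(step Q h)^[n] f - (step Q h')^[n] f‖ ≤ n * (|h - h'| * (qC Q * ‖f‖)) := by
  induction n with
  | zero => intro f; simp
  | succ n ih =>
    intro f
    rw [Function.iterate_succ_apply, Function.iterate_succ_apply]
    have t1 : ‖(step Q h)^[n] (step Q h f) - (step Q h)^[n] (step Q h' f)‖
        ≤ ‖step Q h f - step Q h' f‖ := (hh.iterate n).contr _ _
    have t2 := ih (step Q h' f)
    have t3 := step_time hQ hQb h h' f
    have t4 : ‖step Q h' f‖ ≤ ‖f‖ := hh'.norm_le' f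
    have tri : ‖(step Q h)^[n] (step Q h f) - (step Q h')^[n] (step Q h' f)‖
        ≤ ‖(step Q h)^[n] (step Q h f) - (step Q h)^[n] (step Q h' f)‖
          + ‖(step Q h)^[n] (step Q h' f) - (step Q h')^[n] (step Q h' f)‖ := by
      have := norm_add_le ((step Q h)^[n] (step Q h f) - (step Q h)^[n] (step Q h' f))
        ((step Q h)^[n] (step Q h' f) - (step Q h')^[n] (step Q h' f))
      rw [sub_add_sub_cancel] at this
      exact this
    have hC := qC_nonneg Q
    have habs := abs_nonneg (h - h')
    have hn0 : (0:ℝ) ≤ n := Nat.cast_nonneg n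
    push_cast
    nlinarith [mul_le_mul_of_nonneg_left t4 (mul_nonneg (mul_nonneg hn0 habs) hC)]

lemma euler_time [DiscreteTopology X] (hQ : IsSublinearRate Q) (hQb : opSemiNorm Q ≠ ⊤)
    {s t : ℝ} (hs : 0 ≤ s) (ht : 0 ≤ t) {n : ℕ}
    (hns : s * qC Q ≤ n) (hnt : t * qC Q ≤ n) (f : BoundedContinuousFunction X ℝ) :
    ‖euler Q s n f - euler Q t n f‖ ≤ |s - t| * (qC Q * ‖f‖) := by
  rcases Nat.eq_zero_or_pos n with rfl | hn0
  · have : euler Q s 0 f - euler Q t 0 f = 0 := by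
      simp [euler]
    rw [this, norm_zero]
    exact mul_nonneg (abs_nonneg _) (mul_nonneg (qC_nonneg Q) (norm_nonneg _))
  · have hnpos : (0:ℝ) < n := by exact_mod_cast hn0
    have nices : Nice (step Q (s / n)) := by
      refine step_nice hQ hQb (div_nonneg hs hnpos.le) ?_
      rw [div_mul_eq_mul_div, div_le_one hnpos]; exact hns
    have nicet : Nice (step Q (t / n)) := by
      refine step_nice hQ hQb (div_nonneg ht hnpos.le) ?_
      rw [div_mul_eq_mul_div, div_le_one hnpos]; exact hnt
    have h1 := iterate_time hQ hQb nices nicet n f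
    rw [euler_eq, euler_eq]
    refine h1.trans (le_of_eq ?_)
    have h2 : |s / n - t / n| = |s - t| / n := by
      rw [div_sub_div_same, abs_div, abs_of_pos hnpos]
    rw [h2]
    field_simp

end AuxDev3
section AuxDev4
variable {X : Type*} [TopologicalSpace X] {Q : Op X}

lemma apply_le_opDist (A B : Op X) (f : BoundedContinuousFunction X ℝ) :
    (‖A f - B f‖₊ : ℝ≥0∞) ≤ opDist A B * ((‖f‖₊ : ℝ≥0∞) + 1) := by
  rcases eq_or_ne f 0 with rfl | hf
  · calc (‖A 0 - B 0‖₊ : ℝ≥0∞) ≤ opDist A B := le_self_add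
      _ ≤ opDist A B * ((‖(0 : BoundedContinuousFunction X ℝ)‖₊ : ℝ≥0∞) + 1) :=
        le_mul_of_one_le_right (zero_le) (le_add_self)
  · have h1 : (‖(A - B) f‖₊ : ℝ≥0∞) / ‖f‖₊ ≤ opSemiNorm (A - B) :=
      le_iSup₂ (f := fun (g : BoundedContinuousFunction X ℝ) (_ : g ≠ 0) =>
        (‖(A - B) g‖₊ : ℝ≥0∞) / ‖g‖₊) f hf
    have hfn : (‖f‖₊ : ℝ≥0∞) ≠ 0 := by simpa using hf
    have h2 : (‖(A - B) f‖₊ : ℝ≥0∞) ≤ opSemiNorm (A - B) * ‖f‖₊ :=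
      (ENNReal.div_le_iff hfn (by simp)).mp h1
    have h3 : (A - B) f = A f - B f := rfl
    rw [h3] at h2
    refine h2.trans ?_
    gcongr
    · exact le_add_self
    · exact le_self_add

lemma conv_of {E : Op X} {t : ℝ}
    (hEt : Tendsto (fun n => opDist (euler Q t n) E) atTop (nhds 0))
    (f : BoundedContinuousFunction X ℝ) :
    Tendsto (fun n => euler Q t n f) atTop (nhds (E f)) := by
  rw [tendsto_iff_norm_sub_tendsto_zero]
  have h1 : Tendsto (fun n => (‖euler Q t n f - E f‖₊ : ℝ≥0∞)) atTop (nhds 0) := by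
    have h2 : Tendsto (fun n => opDist (euler Q t n) E * ((‖f‖₊ : ℝ≥0∞) + 1)) atTop (nhds 0) := by
      have h3 := ENNReal.Tendsto.mul_const hEt (Or.inr (by simp : ((‖f‖₊ : ℝ≥0∞) + 1) ≠ ⊤))
      simpa using h3
    exact tendsto_of_tendsto_of_tendsto_of_le_of_le' tendsto_const_nhds h2
      (Eventually.of_forall fun n => zero_le)
      (Eventually.of_forall fun n => apply_le_opDist _ _ f)
  have h4 : Tendsto (fun n => ‖euler Q t n f - E f‖₊) atTop (nhds 0) := by
    rw [← ENNReal.coe_zero] at h1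
    exact ENNReal.tendsto_coe.mp h1
  have h5 := NNReal.tendsto_coe.mpr h4
  simpa [coe_nnnorm] using h5

lemma convx_of {E : Op X} {t : ℝ}
    (hEt : Tendsto (fun n => opDist (euler Q t n) E) atTop (nhds 0))
    (f : BoundedContinuousFunction X ℝ) (x : X) :
    Tendsto (fun n => euler Q t n f x) atTop (nhds (E f x)) :=
  (continuous_eval_const (F := BoundedContinuousFunction X ℝ) x).continuousAt.tendsto.comp
    (conv_of hEt f)

end AuxDev4
section AuxDev5
variable {X : Type*} [TopologicalSpace X] [DiscreteTopology X] {Q : Op X} {E : ℝ → Op X}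

lemma E_time (hQ : IsSublinearRate Q) (hQb : opSemiNorm Q ≠ ⊤)
    (hE : ∀ t : ℝ, 0 ≤ t → Tendsto (fun n => opDist (euler Q t n) (E t)) atTop (nhds 0))
    {s t : ℝ} (hs : 0 ≤ s) (ht : 0 ≤ t) (f : BoundedContinuousFunction X ℝ) :
    ‖E s f - E t f‖ ≤ |s - t| * (qC Q * ‖f‖) := by
  have hlim : Tendsto (fun n => ‖euler Q s n f - euler Q t n f‖) atTop
      (nhds ‖E s f - E t f‖) :=
    ((conv_of (hE s hs) f).sub (conv_of (hE t ht) f)).norm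
  refine le_of_tendsto hlim ?_
  filter_upwards [eventually_ge_atTop ⌈s * qC Q⌉₊, eventually_ge_atTop ⌈t * qC Q⌉₊] with n h1 h2
  exact euler_time hQ hQb hs ht (Nat.ceil_le.mp h1) (Nat.ceil_le.mp h2) f

lemma E_zero' {E0 : Op X}
    (hE0 : Tendsto (fun n => opDist (euler Q 0 n) E0) atTop (nhds 0)) : E0 = id := by
  funext f
  have h1 : ∀ n : ℕ, euler Q 0 n f = f := by
    intro n
    show (fun g : BoundedContinuousFunction X ℝ => g + ((0:ℝ) / (n:ℝ)) • Q g)^[n] f = f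
    have h2 : (fun g : BoundedContinuousFunction X ℝ => g + ((0:ℝ) / (n:ℝ)) • Q g)
        = (id : Op X) := by
      funext g; simp
    rw [h2, Function.iterate_id, id_eq]
  have h3 : Tendsto (fun _ : ℕ => f) atTop (nhds (E0 f)) := by
    refine (conv_of hE0 f).congr fun n => h1 n
  exact (tendsto_nhds_unique h3 tendsto_const_nhds)

lemma E_transition (hQ : IsSublinearRate Q) (hQb : opSemiNorm Q ≠ ⊤) {E1 : Op X} {t : ℝ}
    (ht : 0 ≤ t)
    (hEt : Tendsto (fun n => opDist (euler Q t n) E1) atTop (nhds 0)) :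
    IsSublinearTransition E1 := by
  refine ⟨?_, ?_, ?_⟩
  · intro c hc f
    refine tendsto_nhds_unique (conv_of hEt (c • f)) ?_
    have h2 : Tendsto (fun n => c • euler Q t n f) atTop (nhds (c • E1 f)) :=
      (conv_of hEt f).const_smul c
    refine Tendsto.congr' ?_ h2
    filter_upwards [eventually_nice hQ hQb ht] with n hn
    exact (hn.homog c hc f).symm
  · intro f g x
    refine le_of_tendsto_of_tendsto (convx_of hEt (f + g) x)
      ((convx_of hEt f x).add (convx_of hEt g x)) ?_
    filter_upwards [eventually_nice hQ hQb ht] with n hn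
    exact hn.subadd f g x
  · intro f x
    refine le_of_tendsto (convx_of hEt f x) ?_
    filter_upwards [eventually_nice hQ hQb ht] with n hn
    exact hn.lesup f x

lemma E_comm (hQ : IsSublinearRate Q) (hQb : opSemiNorm Q ≠ ⊤)
    (hE : ∀ t : ℝ, 0 ≤ t → Tendsto (fun n => opDist (euler Q t n) (E t)) atTop (nhds 0))
    {δ : ℝ} (hδ : 0 < δ) {a b : ℕ} (ha : 0 < a) (hb : 0 < b)
    (f : BoundedContinuousFunction X ℝ) :
    E ((a:ℝ) * δ + (b:ℝ) * δ) f = E ((a:ℝ) * δ) (E ((b:ℝ) * δ) f) := by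
  have ha' : ((a:ℝ)) ≠ 0 := by positivity
  have hb' : ((b:ℝ)) ≠ 0 := by positivity
  set s := (a:ℝ) * δ with hsdef
  set t := (b:ℝ) * δ with htdef
  have hs : 0 ≤ s := by positivity
  have ht : 0 ≤ t := by positivity
  have hst : 0 ≤ s + t := by positivity
  have key : ∀ k : ℕ, euler Q (s + t) ((k+1)*(a+b)) f
      = euler Q s ((k+1)*a) (euler Q t ((k+1)*b) f) := by
    intro k
    have hk' : (((k+1:ℕ)):ℝ) ≠ 0 := by positivity
    have e1 : (s + t) / ((((k+1)*(a+b) : ℕ)) : ℝ) = δ / (((k+1:ℕ)):ℝ) := by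
      rw [hsdef, htdef]
      push_cast
      field_simp
    have e2 : s / ((((k+1)*a : ℕ)) : ℝ) = δ / (((k+1:ℕ)):ℝ) := by
      rw [hsdef]
      push_cast
      field_simp
    have e3 : t / ((((k+1)*b : ℕ)) : ℝ) = δ / (((k+1:ℕ)):ℝ) := by
      rw [htdef]
      push_cast
      field_simp
    rw [euler_eq, euler_eq, euler_eq, e1, e2, e3,
      show (k+1)*(a+b) = (k+1)*a + (k+1)*b from by ring]
    exact Function.iterate_add_apply _ _ _ f
  have sub1 : Tendsto (fun k : ℕ => (k+1)*(a+b)) atTop atTop := by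
    refine tendsto_atTop_mono (fun k => ?_) tendsto_id
    calc k ≤ k + 1 := Nat.le_succ k
      _ ≤ (k+1)*(a+b) := Nat.le_mul_of_pos_right _ (by omega)
  have sub2 : Tendsto (fun k : ℕ => (k+1)*a) atTop atTop := by
    refine tendsto_atTop_mono (fun k => ?_) tendsto_id
    calc k ≤ k + 1 := Nat.le_succ k
      _ ≤ (k+1)*a := Nat.le_mul_of_pos_right _ ha
  have sub3 : Tendsto (fun k : ℕ => (k+1)*b) atTop atTop := by
    refine tendsto_atTop_mono (fun k => ?_) tendsto_id
    calc k ≤ k + 1 := Nat.le_succ k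
      _ ≤ (k+1)*b := Nat.le_mul_of_pos_right _ hb
  have hL : Tendsto (fun k => euler Q (s+t) ((k+1)*(a+b)) f) atTop (nhds (E (s+t) f)) :=
    (conv_of (hE _ hst) f).comp sub1
  have hm1 : Tendsto (fun k => euler Q t ((k+1)*b) f) atTop (nhds (E t f)) :=
    (conv_of (hE t ht) f).comp sub3
  have hmid : Tendsto (fun k => euler Q s ((k+1)*a) (E t f)) atTop (nhds (E s (E t f))) :=
    (conv_of (hE s hs) (E t f)).comp sub2
  have hR : Tendsto (fun k => euler Q s ((k+1)*a) (euler Q t ((k+1)*b) f)) atTop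
      (nhds (E s (E t f))) := by
    rw [tendsto_iff_norm_sub_tendsto_zero]
    have h1 := tendsto_iff_norm_sub_tendsto_zero.mp hm1
    have h2 := tendsto_iff_norm_sub_tendsto_zero.mp hmid
    have h3 : Tendsto (fun k => ‖euler Q t ((k+1)*b) f - E t f‖
        + ‖euler Q s ((k+1)*a) (E t f) - E s (E t f)‖) atTop (nhds 0) := by
      simpa using h1.add h2
    refine tendsto_of_tendsto_of_tendsto_of_le_of_le' tendsto_const_nhds h3
      (Eventually.of_forall fun k => norm_nonneg _) ?_
    filter_upwards [eventually_ge_atTop ⌈s * qC Q⌉₊] with k hk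
    have hknice : Nice (euler Q s ((k+1)*a)) := by
      refine euler_nice hQ hQb hs ?_
      have h4 : s * qC Q ≤ (k : ℝ) := Nat.ceil_le.mp hk
      have h5 : (k:ℝ) ≤ (((k+1)*a : ℕ) : ℝ) := by
        have : k ≤ (k+1)*a := (Nat.le_succ k).trans (Nat.le_mul_of_pos_right _ ha)
        exact_mod_cast this
      linarith
    have tri : ‖euler Q s ((k+1)*a) (euler Q t ((k+1)*b) f) - E s (E t f)‖
        ≤ ‖euler Q s ((k+1)*a) (euler Q t ((k+1)*b) f) - euler Q s ((k+1)*a) (E t f)‖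
          + ‖euler Q s ((k+1)*a) (E t f) - E s (E t f)‖ := by
      have := norm_add_le
        (euler Q s ((k+1)*a) (euler Q t ((k+1)*b) f) - euler Q s ((k+1)*a) (E t f))
        (euler Q s ((k+1)*a) (E t f) - E s (E t f))
      rw [sub_add_sub_cancel] at this
      exact this
    have hcontr : ‖euler Q s ((k+1)*a) (euler Q t ((k+1)*b) f) - euler Q s ((k+1)*a) (E t f)‖
        ≤ ‖euler Q t ((k+1)*b) f - E t f‖ := hknice.contr _ _
    linarith
  exact tendsto_nhds_unique (hL.congr key) hR

end AuxDev5
section AuxDev6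
variable {X : Type*} [TopologicalSpace X] [DiscreteTopology X] {Q : Op X} {E : ℝ → Op X}

lemma E_semigroup (hQ : IsSublinearRate Q) (hQb : opSemiNorm Q ≠ ⊤)
    (hE : ∀ t : ℝ, 0 ≤ t → Tendsto (fun n => opDist (euler Q t n) (E t)) atTop (nhds 0))
    {s t : ℝ} (hs : 0 ≤ s) (ht : 0 ≤ t) : E (s + t) = E s ∘ E t := by
  have hE0 : E 0 = id := E_zero' (hE 0 le_rfl)
  rcases hs.eq_or_lt with rfl | hspos
  · rw [zero_add, hE0]
    rfl
  rcases ht.eq_or_lt with rfl | htpos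
  · rw [add_zero, hE0]
    rfl
  funext f
  show E (s + t) f = E s (E t f)
  -- approximate s by commensurable multiples of t/(j+1)
  set a : ℕ → ℕ := fun j => ⌈((j:ℝ)+1) * s / t⌉₊ with hadef
  set sj : ℕ → ℝ := fun j => (a j : ℝ) * (t / ((j:ℝ)+1)) with hsjdef
  have htne : t ≠ 0 := ne_of_gt htpos
  have hapos : ∀ j, 0 < a j := by
    intro j
    refine Nat.ceil_pos.mpr ?_
    positivity
  have hsj_nonneg : ∀ j, 0 ≤ sj j := by
    intro j
    have : (0:ℝ) ≤ (a j : ℝ) := Nat.cast_nonneg _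
    have h2 : (0:ℝ) ≤ t / ((j:ℝ)+1) := by positivity
    exact mul_nonneg this h2
  have hsj_ge : ∀ j, s ≤ sj j := by
    intro j
    have h1 : ((j:ℝ)+1) * s / t ≤ (a j : ℝ) := Nat.le_ceil _
    rw [div_le_iff₀ htpos] at h1
    have hj1 : (0:ℝ) < (j:ℝ)+1 := by positivity
    have key : 0 ≤ sj j - s := by
      have h2 : sj j - s = ((a j : ℝ) * t - ((j:ℝ)+1) * s) / ((j:ℝ)+1) := by
        simp only [hsjdef]
        field_simp
      rw [h2]
      exact div_nonneg (by linarith) hj1.le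
    linarith
  have hsj_le : ∀ j, sj j ≤ s + t / ((j:ℝ)+1) := by
    intro j
    have h1 : (a j : ℝ) < ((j:ℝ)+1) * s / t + 1 := by
      refine Nat.ceil_lt_add_one ?_
      positivity
    have hj1 : (0:ℝ) < (j:ℝ)+1 := by positivity
    have h2 : (a j : ℝ) * (t / ((j:ℝ)+1)) < (((j:ℝ)+1) * s / t + 1) * (t / ((j:ℝ)+1)) := by
      have h3 : (0:ℝ) < t / ((j:ℝ)+1) := by positivity
      exact mul_lt_mul_of_pos_right h1 h3
    have h4 : (((j:ℝ)+1) * s / t + 1) * (t / ((j:ℝ)+1)) = s + t / ((j:ℝ)+1) := by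
      field_simp
    rw [hsjdef]
    calc (a j : ℝ) * (t / ((j:ℝ)+1)) ≤ (((j:ℝ)+1) * s / t + 1) * (t / ((j:ℝ)+1)) := h2.le
      _ = s + t / ((j:ℝ)+1) := h4
  have hden : Tendsto (fun j : ℕ => t / ((j:ℝ)+1)) atTop (nhds 0) := by
    have h1 : Tendsto (fun j : ℕ => ((j:ℝ)+1)) atTop atTop :=
      tendsto_atTop_add_const_right atTop 1 tendsto_natCast_atTop_atTop
    exact Tendsto.div_atTop tendsto_const_nhds h1
  have hsj_tend : Tendsto sj atTop (nhds s) := by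
    have hupper : Tendsto (fun j : ℕ => s + t / ((j:ℝ)+1)) atTop (nhds s) := by
      have h0 : Tendsto (fun j : ℕ => s + t / ((j:ℝ)+1)) atTop (nhds (s + 0)) :=
        Tendsto.add tendsto_const_nhds hden
      simpa using h0
    exact tendsto_of_tendsto_of_tendsto_of_le_of_le tendsto_const_nhds hupper hsj_ge hsj_le
  -- commensurable identity for each j
  have hcomm : ∀ j : ℕ, E (sj j + t) f = E (sj j) (E t f) := by
    intro j
    have hδ : 0 < t / ((j:ℝ)+1) := by positivity
    have h1 := E_comm hQ hQb hE hδ (hapos j) (Nat.succ_pos j) f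
    have h2 : ((j+1 : ℕ) : ℝ) * (t / ((j:ℝ)+1)) = t := by
      push_cast
      field_simp
    rw [h2] at h1
    exact h1
  -- limits
  have habs : Tendsto (fun j => |sj j - s|) atTop (nhds 0) := by
    have := (hsj_tend.sub (tendsto_const_nhds (x := s))).abs
    simpa using this
  have hnormbound : Tendsto (fun j => |sj j - s| * (qC Q * ‖f‖)) atTop (nhds 0) := by
    have := habs.mul_const (qC Q * ‖f‖)
    simpa using this
  have hnormbound2 : Tendsto (fun j => |sj j - s| * (qC Q * ‖E t f‖)) atTop (nhds 0) := by
    have := habs.mul_const (qC Q * ‖E t f‖)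
    simpa using this
  have hLHS : Tendsto (fun j => E (sj j + t) f) atTop (nhds (E (s + t) f)) := by
    rw [tendsto_iff_norm_sub_tendsto_zero]
    refine tendsto_of_tendsto_of_tendsto_of_le_of_le' tendsto_const_nhds hnormbound
      (Eventually.of_forall fun j => norm_nonneg _) (Eventually.of_forall fun j => ?_)
    have h1 := E_time hQ hQb hE (by linarith [hsj_nonneg j] : (0:ℝ) ≤ sj j + t)
      (by linarith : (0:ℝ) ≤ s + t) f
    have h2 : |sj j + t - (s + t)| = |sj j - s| := by ring_nf
    rw [h2] at h1
    exact h1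
  have hRHS : Tendsto (fun j => E (sj j) (E t f)) atTop (nhds (E s (E t f))) := by
    rw [tendsto_iff_norm_sub_tendsto_zero]
    refine tendsto_of_tendsto_of_tendsto_of_le_of_le' tendsto_const_nhds hnormbound2
      (Eventually.of_forall fun j => norm_nonneg _) (Eventually.of_forall fun j => ?_)
    exact E_time hQ hQb hE (hsj_nonneg j) hs (E t f)
  exact tendsto_nhds_unique (hLHS.congr hcomm) hRHS

lemma E_opnorm_le (hQ : IsSublinearRate Q) (hQb : opSemiNorm Q ≠ ⊤)
    (hE : ∀ t : ℝ, 0 ≤ t → Tendsto (fun n => opDist (euler Q t n) (E t)) atTop (nhds 0))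
    {s t : ℝ} (hs : 0 ≤ s) (ht : 0 ≤ t) :
    opSemiNorm (E s - E t) ≤ ENNReal.ofReal (|s - t| * qC Q) := by
  refine iSup₂_le fun f hf => ?_
  have hfn : (‖f‖₊ : ℝ≥0∞) ≠ 0 := by simpa using hf
  rw [ENNReal.div_le_iff hfn (by simp)]
  have h1 : ‖E s f - E t f‖ ≤ (|s - t| * qC Q) * ‖f‖ := by
    have := E_time hQ hQb hE hs ht f
    linarith [this, mul_assoc |s - t| (qC Q) ‖f‖]
  have h2 : (E s - E t) f = E s f - E t f := rfl
  calc (‖(E s - E t) f‖₊ : ℝ≥0∞) = ENNReal.ofReal ‖E s f - E t f‖ := by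
        rw [h2, ← ENNReal.ofReal_coe_nnreal, coe_nnnorm]
    _ ≤ ENNReal.ofReal ((|s - t| * qC Q) * ‖f‖) := ENNReal.ofReal_le_ofReal h1
    _ = ENNReal.ofReal (|s - t| * qC Q) * ENNReal.ofReal ‖f‖ :=
        ENNReal.ofReal_mul (mul_nonneg (abs_nonneg _) (qC_nonneg Q))
    _ = ENNReal.ofReal (|s - t| * qC Q) * (‖f‖₊ : ℝ≥0∞) := by
        rw [← ENNReal.ofReal_coe_nnreal, coe_nnnorm]

end AuxDev6
theorem stmt_11 {X : Type*} [Countable X] [TopologicalSpace X] [DiscreteTopology X]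
    (Q : Op X) (hQ : IsSublinearRate Q) (hQb : opSemiNorm Q ≠ ⊤)
    (E : ℝ → Op X)
    (hE : ∀ t : ℝ, 0 ≤ t → Tendsto (fun n => opDist (euler Q t n) (E t)) atTop (nhds 0)) :
    E 0 = id ∧
    (∀ s t : ℝ, 0 ≤ s → 0 ≤ t → E (s + t) = E s ∘ E t) ∧
    (∀ t : ℝ, 0 ≤ t → IsSublinearTransition (E t)) ∧
    (∀ t : ℝ, 0 ≤ t →
      Tendsto (fun s => opSemiNorm (E s - E t)) (nhdsWithin t (Set.Ici 0)) (nhds 0)) := by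
  refine ⟨E_zero' (hE 0 le_rfl), fun s t hs ht => E_semigroup hQ hQb hE hs ht,
    fun t ht => E_transition hQ hQb ht (hE t ht), fun t ht => ?_⟩
  have hb : Tendsto (fun s : ℝ => ENNReal.ofReal (|s - t| * qC Q)) (nhdsWithin t (Set.Ici 0))
      (nhds 0) := by
    have hcont : Tendsto (fun s : ℝ => |s - t| * qC Q) (nhdsWithin t (Set.Ici 0)) (nhds 0) := by
      have hc : Continuous fun s : ℝ => |s - t| * qC Q := by continuity
      have h0 : |t - t| * qC Q = 0 := by simp
      exact h0 ▸ (hc.tendsto t).mono_left nhdsWithin_le_nhds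
    have h2 := (ENNReal.continuous_ofReal.tendsto 0).comp hcont
    simpa only [Function.comp_def, ENNReal.ofReal_zero] using h2
  refine tendsto_of_tendsto_of_tendsto_of_le_of_le' tendsto_const_nhds hb
    (Eventually.of_forall fun _ => zero_le) ?_
  filter_upwards [self_mem_nhdsWithin] with s hs
  exact E_opnorm_le hQ hQb hE hs ht
end

section
/- Let T be a sublinear transition operator on ℬ. Then for every n ∈ ℕ, ‖(T^n − I) − n(T − I)‖ ≤ (n(n−1)/2)·‖T − I‖², where ‖·‖ denotes the operator seminorm and T^n is the n-fold composition of T with itself. -/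
open Filter Topology BoundedContinuousFunction ENNReal NNReal

section Aux

variable {X : Type*} [TopologicalSpace X]

lemma opSemiNorm_le_ofReal {A : Op X} {M : ℝ} (hM : 0 ≤ M)
    (h : ∀ f, ‖A f‖ ≤ M * ‖f‖) : opSemiNorm A ≤ ENNReal.ofReal M := by
  refine iSup₂_le fun f hf => ?_
  apply ENNReal.div_le_of_le_mul
  calc (‖A f‖₊ : ℝ≥0∞) = ENNReal.ofReal ‖A f‖ := (ofReal_norm _).symm
    _ ≤ ENNReal.ofReal (M * ‖f‖) := ENNReal.ofReal_le_ofReal (h f)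
    _ = ENNReal.ofReal M * ENNReal.ofReal ‖f‖ := ENNReal.ofReal_mul hM
    _ = ENNReal.ofReal M * (‖f‖₊ : ℝ≥0∞) := by rw [ofReal_norm, enorm_eq_nnnorm]

end Aux

theorem stmt_14 {X : Type*} [Countable X] [TopologicalSpace X] [DiscreteTopology X]
    (T : Op X) (hT : IsSublinearTransition T) (n : ℕ) :
    opSemiNorm ((T^[n] - id) - (n : ℝ) • (T - id))
      ≤ ENNReal.ofReal ((n : ℝ) * ((n : ℝ) - 1) / 2) * opSemiNorm (T - id) ^ 2 := by

  classical
  obtain ⟨h1, h2, h3⟩ := hT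
  -- T 0 = 0
  have hT0 : T 0 = 0 := by
    have := h1 0 le_rfl 0
    simpa using this
  -- pointwise bound from above
  have hpt : ∀ f : BoundedContinuousFunction X ℝ, ∀ x, T f x ≤ ‖f‖ := by
    intro f x
    refine le_trans (h3 f x) (Real.iSup_le (fun y => ?_) (norm_nonneg f))
    exact le_trans (le_abs_self _) (f.norm_coe_le_norm y)
  -- subadditivity in subtraction form
  have hsub : ∀ f g : BoundedContinuousFunction X ℝ, ∀ x,
      T f x - T g x ≤ T (f - g) x := by
    intro f g x
    have := h2 g (f - g) x
    rw [add_sub_cancel] at this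
    linarith
  -- T is nonexpansive
  have hlipT : ∀ f g : BoundedContinuousFunction X ℝ, ‖T f - T g‖ ≤ ‖f - g‖ := by
    intro f g
    rw [BoundedContinuousFunction.norm_le (norm_nonneg _)]
    intro x
    rw [BoundedContinuousFunction.coe_sub, Pi.sub_apply, Real.norm_eq_abs, abs_le]
    constructor
    · have h1' := hsub g f x
      have h2' := hpt (g - f) x
      have : ‖g - f‖ = ‖f - g‖ := by rw [show g - f = -(f - g) by ring, norm_neg]
      linarith
    · have h1' := hsub f g x
      have h2' := hpt (f - g) x
      linarith
  have hnormT : ∀ f : BoundedContinuousFunction X ℝ, ‖T f‖ ≤ ‖f‖ := by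
    intro f
    have := hlipT f 0
    simpa [hT0] using this
  -- the seminorm r of T - id is finite
  set r : ℝ≥0∞ := opSemiNorm (T - id) with hr
  have hbound2 : ∀ f : BoundedContinuousFunction X ℝ, ‖(T - id : Op X) f‖ ≤ 2 * ‖f‖ := by
    intro f
    show ‖T f - f‖ ≤ 2 * ‖f‖
    calc ‖T f - f‖ ≤ ‖T f‖ + ‖f‖ := norm_sub_le _ _
      _ ≤ ‖f‖ + ‖f‖ := by linarith [hnormT f]
      _ = 2 * ‖f‖ := by ring
  have hrfin : r ≠ ∞ := by
    have := opSemiNorm_le_ofReal (by norm_num : (0:ℝ) ≤ 2) hbound2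
    exact ne_top_of_le_ne_top ENNReal.ofReal_ne_top this
  set c : ℝ := r.toReal with hc
  have hc0 : 0 ≤ c := ENNReal.toReal_nonneg
  -- key extraction: ‖T f - f‖ ≤ c * ‖f‖
  have hTI : ∀ f : BoundedContinuousFunction X ℝ, ‖T f - f‖ ≤ c * ‖f‖ := by
    intro f
    by_cases hf : f = 0
    · simp [hf, hT0]
    · have hle : (‖(T - id : Op X) f‖₊ : ℝ≥0∞) / (‖f‖₊ : ℝ≥0∞) ≤ r := by
        exact le_iSup₂ (f := fun g (_ : g ≠ 0) =>
          (‖(T - id : Op X) g‖₊ : ℝ≥0∞) / (‖g‖₊ : ℝ≥0∞)) f hf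
      have hfn : (‖f‖₊ : ℝ≥0∞) ≠ 0 := by simpa [nnnorm_eq_zero] using hf
      have hmul : (‖(T - id : Op X) f‖₊ : ℝ≥0∞) ≤ r * (‖f‖₊ : ℝ≥0∞) :=
        (ENNReal.div_le_iff hfn ENNReal.coe_ne_top).mp hle
      have hfin : r * (‖f‖₊ : ℝ≥0∞) ≠ ∞ := ENNReal.mul_ne_top hrfin ENNReal.coe_ne_top
      have := ENNReal.toReal_mono hfin hmul
      rw [ENNReal.toReal_mul] at this
      simpa [ENNReal.coe_toReal, coe_nnnorm] using this
  -- Lipschitz estimate for T - id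
  have hLip : ∀ f g : BoundedContinuousFunction X ℝ,
      ‖(T f - f) - (T g - g)‖ ≤ c * ‖f - g‖ := by
    intro f g
    rw [BoundedContinuousFunction.norm_le (by positivity)]
    intro x
    rw [Real.norm_eq_abs, abs_le]
    have key : ∀ u v : BoundedContinuousFunction X ℝ,
        ((T u - u) - (T v - v)) x ≤ c * ‖u - v‖ := by
      intro u v
      have e1 : ((T u - u) - (T v - v)) x = (T u x - T v x) - (u - v) x := by
        simp; ring
      rw [e1]
      have h1' := hsub u v x
      have h2' : T (u - v) x - (u - v) x ≤ ‖T (u - v) - (u - v)‖ := by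
        have := (T (u - v) - (u - v)).norm_coe_le_norm x
        rw [Real.norm_eq_abs] at this
        have h3' : (T (u - v) - (u - v)) x = T (u - v) x - (u - v) x := by simp
        rw [h3'] at this
        exact le_trans (le_abs_self _) this
      have h4' := hTI (u - v)
      linarith
    constructor
    · have := key g f
      have e2 : ((T g - g) - (T f - f)) x = -(((T f - f) - (T g - g)) x) := by simp
      have e3 : ‖g - f‖ = ‖f - g‖ := by rw [show g - f = -(f - g) by ring, norm_neg]
      rw [e2, e3] at this
      linarith
    · exact key f g
  -- iterate norm bound
  have hiterN : ∀ k : ℕ, ∀ f : BoundedContinuousFunction X ℝ, ‖T^[k] f‖ ≤ ‖f‖ := by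
    intro k
    induction k with
    | zero => intro f; simp
    | succ k ih =>
      intro f
      rw [Function.iterate_succ_apply']
      exact le_trans (hnormT _) (ih f)
  have hiter : ∀ k : ℕ, ∀ f : BoundedContinuousFunction X ℝ,
      ‖T^[k] f - f‖ ≤ (k : ℝ) * c * ‖f‖ := by
    intro k
    induction k with
    | zero => intro f; simp
    | succ k ih =>
      intro f
      rw [Function.iterate_succ_apply']
      have e : T (T^[k] f) - f = (T (T^[k] f) - T^[k] f) + (T^[k] f - f) := by ring
      rw [e]
      have b1 : ‖T (T^[k] f) - T^[k] f‖ ≤ c * ‖f‖ :=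
        le_trans (hTI _) (by nlinarith [hiterN k f, norm_nonneg f, norm_nonneg (T^[k] f)])
      calc ‖(T (T^[k] f) - T^[k] f) + (T^[k] f - f)‖
          ≤ ‖T (T^[k] f) - T^[k] f‖ + ‖T^[k] f - f‖ := norm_add_le _ _
        _ ≤ c * ‖f‖ + (k : ℝ) * c * ‖f‖ := add_le_add b1 (ih f)
        _ = ((k : ℕ) + 1 : ℝ) * c * ‖f‖ := by ring
        _ = ((k + 1 : ℕ) : ℝ) * c * ‖f‖ := by push_cast; ring
  -- main estimate
  have hmain : ∀ m : ℕ, ∀ f : BoundedContinuousFunction X ℝ,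
      ‖T^[m] f - f - (m : ℝ) • (T f - f)‖
        ≤ (∑ k ∈ Finset.range m, (k : ℝ)) * c ^ 2 * ‖f‖ := by
    intro m
    induction m with
    | zero => intro f; simp
    | succ m ih =>
      intro f
      rw [Function.iterate_succ_apply']
      have e : T (T^[m] f) - f - ((m + 1 : ℕ) : ℝ) • (T f - f)
          = (T^[m] f - f - (m : ℝ) • (T f - f))
            + ((T (T^[m] f) - T^[m] f) - (T f - f)) := by
        push_cast
        module
      rw [e]
      have b2 : ‖(T (T^[m] f) - T^[m] f) - (T f - f)‖ ≤ (m : ℝ) * c ^ 2 * ‖f‖ := by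
        have := hLip (T^[m] f) f
        have h5 := hiter m f
        nlinarith [norm_nonneg (T^[m] f - f)]
      calc ‖(T^[m] f - f - (m : ℝ) • (T f - f)) + ((T (T^[m] f) - T^[m] f) - (T f - f))‖
          ≤ ‖T^[m] f - f - (m : ℝ) • (T f - f)‖
            + ‖(T (T^[m] f) - T^[m] f) - (T f - f)‖ := norm_add_le _ _
        _ ≤ (∑ k ∈ Finset.range m, (k : ℝ)) * c ^ 2 * ‖f‖ + (m : ℝ) * c ^ 2 * ‖f‖ :=
            add_le_add (ih f) b2
        _ = (∑ k ∈ Finset.range (m + 1), (k : ℝ)) * c ^ 2 * ‖f‖ := by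
            rw [Finset.sum_range_succ]; ring
  -- sum value
  have hsum : (∑ k ∈ Finset.range n, (k : ℝ)) = (n : ℝ) * ((n : ℝ) - 1) / 2 := by
    induction n with
    | zero => simp
    | succ m ih => rw [Finset.sum_range_succ, ih]; push_cast; ring
  have hS0 : 0 ≤ (∑ k ∈ Finset.range n, (k : ℝ)) :=
    Finset.sum_nonneg fun k _ => Nat.cast_nonneg k
  -- conclude
  have hb : ∀ f : BoundedContinuousFunction X ℝ,
      ‖((T^[n] - id) - (n : ℝ) • (T - id) : Op X) f‖
        ≤ (∑ k ∈ Finset.range n, (k : ℝ)) * c ^ 2 * ‖f‖ := by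
    intro f
    have e : ((T^[n] - id) - (n : ℝ) • (T - id) : Op X) f
        = T^[n] f - f - (n : ℝ) • (T f - f) := rfl
    rw [e]
    exact hmain n f
  have hfinal := opSemiNorm_le_ofReal (by positivity) hb
  calc opSemiNorm ((T^[n] - id) - (n : ℝ) • (T - id))
      ≤ ENNReal.ofReal ((∑ k ∈ Finset.range n, (k : ℝ)) * c ^ 2) := hfinal
    _ = ENNReal.ofReal (∑ k ∈ Finset.range n, (k : ℝ)) * ENNReal.ofReal (c ^ 2) :=
        ENNReal.ofReal_mul hS0
    _ = ENNReal.ofReal ((n : ℝ) * ((n : ℝ) - 1) / 2) * opSemiNorm (T - id) ^ 2 := by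
        rw [hsum, ENNReal.ofReal_pow hc0, hc, ENNReal.ofReal_toReal hrfin]
end

section
/- Let (T_t)_{t≥0} be a uniformly continuous semigroup of sublinear transition operators on ℬ and fix t ≥ 0. Then the sequence of operators (n(T_{t/n} − I))_{n∈ℕ} is Cauchy with respect to the operator seminorm, and its limit ln T_t := lim_{n→∞} n(T_{t/n} − I) is a bounded sublinear rate operator. -/
open Filter Topology BoundedContinuousFunction ENNReal NNReal

section Helpers
variable {X : Type*} [TopologicalSpace X]

lemma ennreal_coe_mul_ofReal {a b : ℝ≥0} {c : ℝ} (hc : 0 ≤ c) (h : (a : ℝ) ≤ c * b) :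
    (a : ℝ≥0∞) ≤ ENNReal.ofReal c * (b : ℝ≥0∞) := by
  rw [← ENNReal.ofReal_coe_nnreal, ← ENNReal.ofReal_coe_nnreal (p := b),
    ← ENNReal.ofReal_mul hc]
  exact ENNReal.ofReal_le_ofReal h

lemma opSemiNorm_le_of_bound (A : Op X) {c : ℝ} (hc : 0 ≤ c)
    (h : ∀ f : BoundedContinuousFunction X ℝ, f ≠ 0 → ‖A f‖ ≤ c * ‖f‖) :
    opSemiNorm A ≤ ENNReal.ofReal c := by
  refine iSup₂_le fun f hf => ?_
  have hf' : (‖f‖₊ : ℝ≥0∞) ≠ 0 := by simpa using hf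
  rw [ENNReal.div_le_iff hf' (by simp)]
  exact ennreal_coe_mul_ofReal hc (h f hf)

lemma bound_of_opSemiNorm_le (A : Op X) {c : ℝ} (hc : 0 ≤ c)
    (hA : opSemiNorm A ≤ ENNReal.ofReal c)
    (f : BoundedContinuousFunction X ℝ) (hf : f ≠ 0) : ‖A f‖ ≤ c * ‖f‖ := by
  have h1 : (‖A f‖₊ : ℝ≥0∞) / (‖f‖₊ : ℝ≥0∞) ≤ ENNReal.ofReal c :=
    le_trans (le_iSup₂ (f := fun g (_ : g ≠ 0) => (‖A g‖₊ : ℝ≥0∞) / (‖g‖₊ : ℝ≥0∞)) f hf) hA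
  have hf' : (‖f‖₊ : ℝ≥0∞) ≠ 0 := by simpa using hf
  rw [ENNReal.div_le_iff hf' (by simp)] at h1
  rw [← ENNReal.ofReal_coe_nnreal, ← ENNReal.ofReal_coe_nnreal (p := ‖f‖₊),
    ← ENNReal.ofReal_mul hc, ENNReal.ofReal_le_ofReal_iff (by positivity)] at h1
  simpa using h1

end Helpers

section Trans
variable {X : Type*} [TopologicalSpace X] {S : Op X}

lemma trans_zero (hS : IsSublinearTransition S) : S 0 = 0 := by
  have := hS.1 0 le_rfl 0
  simpa using this

lemma trans_pt_le_norm (hS : IsSublinearTransition S)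
    (u : BoundedContinuousFunction X ℝ) (x : X) : S u x ≤ ‖u‖ := by
  haveI : Nonempty X := ⟨x⟩
  refine (hS.2.2 u x).trans (ciSup_le fun y => ?_)
  exact (abs_le.mp (by simpa [Real.norm_eq_abs] using u.norm_coe_le_norm y)).2

lemma trans_sub_le (hS : IsSublinearTransition S)
    (f g : BoundedContinuousFunction X ℝ) (x : X) : S f x - S g x ≤ S (f - g) x := by
  have h := hS.2.1 (f - g) g x
  have e : f - g + g = f := by abel
  rw [e] at h
  linarith

lemma bracket_one_side (hS : IsSublinearTransition S) {c : ℝ}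
    (hb : ∀ u : BoundedContinuousFunction X ℝ, ‖S u - u‖ ≤ c * ‖u‖)
    (f g : BoundedContinuousFunction X ℝ) (x : X) :
    S g x - S f x - (g x - f x) ≤ c * ‖g - f‖ := by
  have h1 : S g x - S f x ≤ S (g - f) x := trans_sub_le hS g f x
  have h2 : S (g - f) x - (g - f) x ≤ ‖S (g - f) - (g - f)‖ := by
    have := (S (g - f) - (g - f)).norm_coe_le_norm x
    rw [Real.norm_eq_abs] at this
    have h3 := (abs_le.mp this).2
    simpa using h3
  have h4 : (g - f) x = g x - f x := by simp
  have := hb (g - f)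
  linarith

lemma bracket (hS : IsSublinearTransition S) {c : ℝ} (hc : 0 ≤ c)
    (hb : ∀ u : BoundedContinuousFunction X ℝ, ‖S u - u‖ ≤ c * ‖u‖)
    (f g : BoundedContinuousFunction X ℝ) :
    ‖S g - S f - (g - f)‖ ≤ c * ‖g - f‖ := by
  rw [BoundedContinuousFunction.norm_le (by positivity)]
  intro x
  rw [Real.norm_eq_abs, abs_le]
  constructor
  · have h := bracket_one_side hS hb g f x
    rw [norm_sub_rev] at h
    simp only [BoundedContinuousFunction.coe_sub, Pi.sub_apply]
    linarith
  · have h := bracket_one_side hS hb f g x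
    simp only [BoundedContinuousFunction.coe_sub, Pi.sub_apply]
    linarith

end Trans

section Tele
variable {X : Type*} [TopologicalSpace X] {T : ℝ → Op X}

lemma telescope (hT : ∀ s : ℝ, 0 ≤ s → IsSublinearTransition (T s)) (hT0 : T 0 = id)
    (hTsg : ∀ s u : ℝ, 0 ≤ s → 0 ≤ u → T (s + u) = T s ∘ T u)
    {c b h : ℝ} (hc : 0 ≤ c) (hh : 0 ≤ h)
    (hb : ∀ s, 0 ≤ s → s ≤ b → ∀ u : BoundedContinuousFunction X ℝ, ‖T s u - u‖ ≤ c * ‖u‖) :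
    ∀ j : ℕ, (j : ℝ) * h ≤ b → ∀ f : BoundedContinuousFunction X ℝ,
      ‖T ((j : ℝ) * h) f - f - (j : ℝ) • (T h f - f)‖ ≤ (j : ℝ) * c * ‖T h f - f‖ := by
  intro j
  induction j with
  | zero => intro _ f; simp [hT0]
  | succ j ih =>
    intro hjb f
    have hjh : (j : ℝ) * h ≤ ((j : ℝ) + 1) * h := by nlinarith
    have hjb' : (j : ℝ) * h ≤ b := le_trans hjh (by push_cast at hjb ⊢; linarith)
    have hj0 : (0 : ℝ) ≤ (j : ℝ) * h := by positivity
    set g := T h f with hg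
    have hTj1 : T (((j + 1 : ℕ) : ℝ) * h) f = T ((j : ℝ) * h) g := by
      have : ((j + 1 : ℕ) : ℝ) * h = (j : ℝ) * h + h := by push_cast; ring
      rw [this, hTsg _ _ hj0 hh]; rfl
    have hbr : ‖T ((j : ℝ) * h) g - T ((j : ℝ) * h) f - (g - f)‖ ≤ c * ‖g - f‖ :=
      bracket (hT _ hj0) hc (fun u => hb _ hj0 hjb' u) f g
    have hihf := ih hjb' f
    have hkey : T (((j + 1 : ℕ) : ℝ) * h) f - f - ((j : ℝ) + 1) • (T h f - f)
        = (T ((j : ℝ) * h) g - T ((j : ℝ) * h) f - (g - f))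
          + (T ((j : ℝ) * h) f - f - (j : ℝ) • (T h f - f)) := by
      rw [hTj1, add_smul, one_smul]
      abel
    have := norm_add_le (T ((j : ℝ) * h) g - T ((j : ℝ) * h) f - (g - f))
      (T ((j : ℝ) * h) f - f - (j : ℝ) • (T h f - f))
    push_cast
    push_cast at hkey
    rw [hkey]
    calc _ ≤ c * ‖g - f‖ + (j : ℝ) * c * ‖T h f - f‖ := le_trans this (by gcongr)
      _ = ((j : ℝ) + 1) * c * ‖T h f - f‖ := by
          have : ‖g - f‖ = ‖T h f - f‖ := by rw [hg]
          rw [this]; ring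

end Tele

section StepA
variable {X : Type*} [TopologicalSpace X] {T : ℝ → Op X}

lemma linear_bound (hT : ∀ s : ℝ, 0 ≤ s → IsSublinearTransition (T s)) (hT0 : T 0 = id)
    (hTsg : ∀ s u : ℝ, 0 ≤ s → 0 ≤ u → T (s + u) = T s ∘ T u)
    {t0 : ℝ} (ht0 : 0 < t0)
    (hb : ∀ s, 0 ≤ s → s ≤ t0 → ∀ u : BoundedContinuousFunction X ℝ,
      ‖T s u - u‖ ≤ (1/2) * ‖u‖) :
    ∀ s, 0 ≤ s → s ≤ t0 → ∀ u : BoundedContinuousFunction X ℝ,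
      ‖T s u - u‖ ≤ (4 / t0) * s * ‖u‖ := by
  intro s hs0 hst0 u
  rcases eq_or_lt_of_le hs0 with hs | hs
  · rw [← hs, hT0]; simp
  set r := t0 / s with hr
  have hr1 : 1 ≤ r := (one_le_div hs).mpr hst0
  set m := ⌊r⌋₊ with hm
  have hm1 : 1 ≤ m := Nat.le_floor (by exact_mod_cast hr1)
  have hmr : (m : ℝ) ≤ r := Nat.floor_le (by positivity)
  have hms : (m : ℝ) * s ≤ t0 := by
    have h1 : (m : ℝ) * s ≤ (t0 / s) * s := mul_le_mul_of_nonneg_right hmr hs0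
    have h2 : (t0 / s) * s = t0 := by field_simp
    linarith
  have hm2 : r / 2 ≤ (m : ℝ) := by
    rcases le_or_gt 2 r with h2 | h2
    · have := Nat.sub_one_lt_floor r
      rw [← hm] at this
      linarith
    · have : (1 : ℝ) ≤ (m : ℝ) := by exact_mod_cast hm1
      linarith
  have htel := telescope hT hT0 hTsg (by norm_num : (0:ℝ) ≤ 1/2) (le_of_lt hs) hb m hms u
  have hnorm_smul : ‖(m : ℝ) • (T s u - u)‖ = (m : ℝ) * ‖T s u - u‖ := by
    have h := norm_smul (m : ℝ) (T s u - u)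
    rw [Real.norm_eq_abs, abs_of_nonneg (by positivity : (0:ℝ) ≤ (m:ℝ))] at h
    exact h
  have htri : (m : ℝ) * ‖T s u - u‖
      ≤ ‖T ((m : ℝ) * s) u - u‖ + (m : ℝ) * (1/2) * ‖T s u - u‖ := by
    rw [← hnorm_smul]
    calc ‖(m : ℝ) • (T s u - u)‖
        = ‖(T ((m : ℝ) * s) u - u) - (T ((m : ℝ) * s) u - u - (m : ℝ) • (T s u - u))‖ := by
          congr 1; abel
      _ ≤ ‖T ((m : ℝ) * s) u - u‖ + ‖T ((m : ℝ) * s) u - u - (m : ℝ) • (T s u - u)‖ :=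
          norm_sub_le _ _
      _ ≤ ‖T ((m : ℝ) * s) u - u‖ + (m : ℝ) * (1/2) * ‖T s u - u‖ := by gcongr
  have hsm : ‖T ((m : ℝ) * s) u - u‖ ≤ (1/2) * ‖u‖ := hb _ (by positivity) hms u
  have hmain : (m : ℝ) * ‖T s u - u‖ ≤ ‖u‖ := by linarith
  have hmpos : (0 : ℝ) < (m : ℝ) := by exact_mod_cast hm1
  have hnu : 0 ≤ ‖u‖ := norm_nonneg u
  have h4 : 1 ≤ (4 / t0) * s * (m : ℝ) := by
    have hrr : t0 / (2 * s) ≤ (m : ℝ) := by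
      rw [hr] at hm2
      calc t0 / (2 * s) = (t0 / s) / 2 := by ring
        _ ≤ (m : ℝ) := hm2
    have ha : (0:ℝ) < (4 / t0) * s := by positivity
    have h5 := mul_le_mul_of_nonneg_left hrr (le_of_lt ha)
    have h6 : (4 / t0) * s * (t0 / (2 * s)) = 2 := by field_simp; ring
    linarith
  have hfin : ‖T s u - u‖ ≤ ‖u‖ / m := by rw [le_div_iff₀ hmpos]; linarith
  have h7 := mul_le_mul_of_nonneg_left h4 hnu
  rw [mul_one] at h7
  refine hfin.trans ?_
  rw [div_le_iff₀ hmpos]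
  calc ‖u‖ ≤ ‖u‖ * ((4 / t0) * s * (m : ℝ)) := h7
    _ = 4 / t0 * s * ‖u‖ * (m : ℝ) := by ring
end StepA

section StepB
variable {X : Type*} [TopologicalSpace X] {T : ℝ → Op X}

lemma cauchy_est (hT : ∀ s : ℝ, 0 ≤ s → IsSublinearTransition (T s)) (hT0 : T 0 = id)
    (hTsg : ∀ s u : ℝ, 0 ≤ s → 0 ≤ u → T (s + u) = T s ∘ T u)
    {t0 K t : ℝ} (ht0 : 0 < t0) (hK0 : 0 ≤ K) (ht : 0 ≤ t)
    (hK : ∀ s, 0 ≤ s → s ≤ t0 → ∀ u : BoundedContinuousFunction X ℝ,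
      ‖T s u - u‖ ≤ K * s * ‖u‖)
    {n m : ℕ} (hn : 1 ≤ n) (hm : 1 ≤ m) (hnt : t / n ≤ t0)
    (f : BoundedContinuousFunction X ℝ) :
    ‖(n : ℝ) • (T (t / n) f - f) - ((n * m : ℕ) : ℝ) • (T (t / (n * m : ℕ)) f - f)‖
      ≤ (K ^ 2 * t ^ 2 / n) * ‖f‖ := by
  have hn0 : (0 : ℝ) < n := by exact_mod_cast hn
  have hm0 : (0 : ℝ) < m := by exact_mod_cast hm
  set h : ℝ := t / (n * m : ℕ) with hh
  have hcast : ((n * m : ℕ) : ℝ) = (n : ℝ) * (m : ℝ) := by push_cast; ring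
  have hh0 : 0 ≤ h := by rw [hh]; positivity
  have heq : (m : ℝ) * h = t / n := by
    rw [hh, hcast]; field_simp
  have htn0 : 0 ≤ t / n := by positivity
  have hhle : h ≤ t / n := by
    nlinarith [mul_le_mul_of_nonneg_right (show (1:ℝ) ≤ m from by exact_mod_cast hm) hh0]
  have hb' : ∀ s, 0 ≤ s → s ≤ t / n → ∀ u : BoundedContinuousFunction X ℝ,
      ‖T s u - u‖ ≤ (K * (t / n)) * ‖u‖ := by
    intro s hs0 hsn u
    refine (hK s hs0 (hsn.trans hnt) u).trans ?_
    have : K * s ≤ K * (t / n) := mul_le_mul_of_nonneg_left hsn hK0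
    exact mul_le_mul_of_nonneg_right this (norm_nonneg u)
  have htel := telescope hT hT0 hTsg (by positivity) hh0 hb' m (le_of_eq heq) f
  rw [heq] at htel
  have hTh : ‖T h f - f‖ ≤ K * h * ‖f‖ := hK h hh0 (hhle.trans hnt) f
  have hsplit : (n : ℝ) • (T (t / n) f - f) - ((n * m : ℕ) : ℝ) • (T h f - f)
      = (n : ℝ) • (T (t / n) f - f - (m : ℝ) • (T h f - f)) := by
    rw [hcast]
    module
  rw [hsplit]
  have hns : ‖(n : ℝ) • (T (t / n) f - f - (m : ℝ) • (T h f - f))‖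
      = (n : ℝ) * ‖T (t / n) f - f - (m : ℝ) • (T h f - f)‖ := by
    have h := norm_smul (n : ℝ) (T (t / n) f - f - (m : ℝ) • (T h f - f))
    rw [Real.norm_eq_abs, abs_of_nonneg (le_of_lt hn0)] at h
    exact h
  rw [hns]
  calc (n : ℝ) * ‖T (t / n) f - f - (m : ℝ) • (T h f - f)‖
      ≤ (n : ℝ) * ((m : ℝ) * (K * (t / n)) * ‖T h f - f‖) := by
        refine mul_le_mul_of_nonneg_left htel (le_of_lt hn0)
    _ ≤ (n : ℝ) * ((m : ℝ) * (K * (t / n)) * (K * h * ‖f‖)) := by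
        refine mul_le_mul_of_nonneg_left (mul_le_mul_of_nonneg_left hTh (by positivity))
          (le_of_lt hn0)
    _ = K ^ 2 * t ^ 2 / n * ‖f‖ := by
        rw [hh, hcast]; field_simp
end StepB

section Const
variable {X : Type*} [TopologicalSpace X] {S : Op X}

lemma trans_const (hS : IsSublinearTransition S) (c : ℝ) :
    S (BoundedContinuousFunction.const X c) = BoundedContinuousFunction.const X c := by
  ext x
  haveI : Nonempty X := ⟨x⟩
  have hub : S (BoundedContinuousFunction.const X c) x ≤ c := by
    refine (hS.2.2 _ x).trans ?_
    simp [ciSup_const]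
  have hlb : c ≤ S (BoundedContinuousFunction.const X c) x := by
    have hadd := hS.2.1 (BoundedContinuousFunction.const X c)
      (BoundedContinuousFunction.const X (-c)) x
    have hzero : BoundedContinuousFunction.const X c
        + BoundedContinuousFunction.const X (-c) = 0 := by ext y; simp
    rw [hzero, trans_zero hS] at hadd
    have hneg : S (BoundedContinuousFunction.const X (-c)) x ≤ -c := by
      refine (hS.2.2 _ x).trans ?_
      simp [ciSup_const]
    have h0 : (0 : BoundedContinuousFunction X ℝ) x = 0 := rfl
    rw [h0] at hadd
    linarith
  simpa using le_antisymm hub hlb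

end Const

/-- STATEMENT 15 -/
noncomputable def stmt15D {X : Type*} [TopologicalSpace X] (T : ℝ → Op X) (t : ℝ) (n : ℕ) :
    Op X := (n : ℝ) • (T (t / n) - id)

theorem stmt_15 {X : Type*} [Countable X] [TopologicalSpace X] [DiscreteTopology X]
    (T : ℝ → Op X)
    (hT : ∀ t : ℝ, 0 ≤ t → IsSublinearTransition (T t))
    (hT0 : T 0 = id)
    (hTsg : ∀ s t : ℝ, 0 ≤ s → 0 ≤ t → T (s + t) = T s ∘ T t)
    (hUC : IsUniformlyContinuousSG T) (t : ℝ) (ht : 0 ≤ t) :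
    (∀ ε : ℝ≥0∞, 0 < ε → ∃ N : ℕ, ∀ m ≥ N, ∀ n ≥ N,
        opSemiNorm ((m : ℝ) • (T (t / m) - id) - (n : ℝ) • (T (t / n) - id)) < ε) ∧
    ∃ L : Op X, IsSublinearRate L ∧ opSemiNorm L ≠ ⊤ ∧
      Tendsto (fun n : ℕ => opSemiNorm ((n : ℝ) • (T (t / n) - id) - L)) atTop (nhds 0) := by
  classical
  -- Step 1: a window [0, t0] on which `‖T s - I‖ ≤ 1/2`.
  have h0 := hUC 0 le_rfl
  have hev : ∀ᶠ s in nhdsWithin (0 : ℝ) (Set.Ici 0),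
      opSemiNorm (T s - T 0) < ENNReal.ofReal (1 / 2) :=
    h0.eventually_lt_const (by simp)
  obtain ⟨ε₀, hε₀, hball⟩ := Metric.mem_nhdsWithin_iff.mp hev
  set t0 : ℝ := ε₀ / 2 with ht0def
  have ht0 : 0 < t0 := by positivity
  have hb : ∀ s, 0 ≤ s → s ≤ t0 → ∀ u : BoundedContinuousFunction X ℝ,
      ‖T s u - u‖ ≤ (1 / 2) * ‖u‖ := by
    intro s hs0 hst0 u
    have hmem : s ∈ Metric.ball (0 : ℝ) ε₀ ∩ Set.Ici 0 := by
      constructor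
      · simp only [Metric.mem_ball, Real.dist_eq, sub_zero, abs_of_nonneg hs0]
        linarith
      · exact hs0
    have hlt := hball hmem
    rcases eq_or_ne u 0 with rfl | hu
    · rw [trans_zero (hT s hs0)]; simp
    · have hB := bound_of_opSemiNorm_le (T s - T 0) (by norm_num) (le_of_lt hlt) u hu
      simpa [Pi.sub_apply, hT0] using hB
  set K : ℝ := 4 / t0 with hKdef
  have hK0 : 0 ≤ K := by positivity
  have hSA := linear_bound hT hT0 hTsg ht0 hb
  set C : ℝ := K ^ 2 * t ^ 2 with hCdef
  have hC0 : 0 ≤ C := by positivity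
  set D : ℕ → Op X := stmt15D T t with hD
  have hDapp : ∀ (n : ℕ) (f : BoundedContinuousFunction X ℝ),
      D n f = (n : ℝ) • (T (t / n) f - f) := by
    intro n f
    simp [hD, stmt15D, Pi.smul_apply, Pi.sub_apply]
  have hDx : ∀ (n : ℕ) (u : BoundedContinuousFunction X ℝ) (x : X),
      D n u x = (n : ℝ) * (T (t / n) u x - u x) := by
    intro n u x
    rw [hDapp]
    simp
  set N0 : ℕ := max 1 ⌈t / t0⌉₊ with hN0def
  have hN0 : ∀ n : ℕ, N0 ≤ n → 1 ≤ n ∧ t / n ≤ t0 := by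
    intro n hn
    have h1 : 1 ≤ n := le_trans (le_max_left _ _) hn
    have h2 : ⌈t / t0⌉₊ ≤ n := le_trans (le_max_right _ _) hn
    have hn0 : (0 : ℝ) < n := by exact_mod_cast h1
    have h3 : t / t0 ≤ (n : ℝ) := le_trans (Nat.le_ceil _) (by exact_mod_cast h2)
    refine ⟨h1, ?_⟩
    rw [div_le_iff₀ hn0]
    rw [div_le_iff₀ ht0] at h3
    nlinarith
  have key : ∀ n m : ℕ, N0 ≤ n → 1 ≤ m → ∀ f : BoundedContinuousFunction X ℝ,
      ‖D n f - D (n * m) f‖ ≤ C / n * ‖f‖ := by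
    intro n m hn hm f
    obtain ⟨h1, h2⟩ := hN0 n hn
    have hce := cauchy_est hT hT0 hTsg ht0 hK0 ht hSA h1 hm h2 f
    rw [hDapp, hDapp]
    exact hce
  have hDD : ∀ n m : ℕ, N0 ≤ n → N0 ≤ m → ∀ f : BoundedContinuousFunction X ℝ,
      ‖D n f - D m f‖ ≤ (C / n + C / m) * ‖f‖ := by
    intro n m hn hm f
    have k1 := key n m hn (hN0 m hm).1 f
    have k2 := key m n hm (hN0 n hn).1 f
    rw [Nat.mul_comm m n] at k2
    calc ‖D n f - D m f‖ ≤ ‖D n f - D (n * m) f‖ + ‖D m f - D (n * m) f‖ := by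
          have he : D n f - D m f = (D n f - D (n * m) f) - (D m f - D (n * m) f) := by abel
          rw [he]; exact norm_sub_le _ _
      _ ≤ C / n * ‖f‖ + C / m * ‖f‖ := add_le_add k1 k2
      _ = (C / n + C / m) * ‖f‖ := by ring
  -- existence of the limit
  have hex : ∀ f : BoundedContinuousFunction X ℝ,
      ∃ a, Tendsto (fun n => D n f) atTop (𝓝 a) := by
    intro f
    have hg0 : Tendsto (fun k : ℕ => (C / k + C / k) * ‖f‖) atTop (𝓝 0) := by
      have hg := tendsto_const_div_atTop_nhds_zero_nat (2 * C * ‖f‖)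
      refine hg.congr fun k => ?_
      ring
    have hcs : CauchySeq (fun n => D (n + N0) f) := by
      apply cauchySeq_of_le_tendsto_0 (fun N => (C / (N + N0 : ℕ) + C / (N + N0 : ℕ)) * ‖f‖)
      · intro n m N hn hm
        rw [dist_eq_norm]
        refine (hDD _ _ le_add_self le_add_self f).trans ?_
        have hNpos : (0 : ℝ) < ((N + N0 : ℕ) : ℝ) := by
          have : 1 ≤ N + N0 := le_add_left (le_max_left 1 _)
          exact_mod_cast Nat.lt_of_lt_of_le Nat.zero_lt_one this
        have hNn : C / ((n + N0 : ℕ) : ℝ) ≤ C / ((N + N0 : ℕ) : ℝ) :=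
          div_le_div_of_nonneg_left hC0 hNpos (by exact_mod_cast Nat.add_le_add_right hn N0)
        have hNm : C / ((m + N0 : ℕ) : ℝ) ≤ C / ((N + N0 : ℕ) : ℝ) :=
          div_le_div_of_nonneg_left hC0 hNpos (by exact_mod_cast Nat.add_le_add_right hm N0)
        exact mul_le_mul_of_nonneg_right (add_le_add hNn hNm) (norm_nonneg f)
      · exact hg0.comp (tendsto_add_atTop_nat N0)
    obtain ⟨a, ha⟩ := cauchySeq_tendsto_of_complete hcs
    exact ⟨a, (tendsto_add_atTop_iff_nat N0).mp ha⟩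
  choose L hL using hex
  have hLpt : ∀ (f : BoundedContinuousFunction X ℝ) (x : X),
      Tendsto (fun n => D n f x) atTop (𝓝 (L f x)) := by
    intro f x
    exact ((BoundedContinuousFunction.lipschitz_eval_const x).continuous.tendsto (L f)).comp (hL f)
  have hrate : ∀ n : ℕ, N0 ≤ n → ∀ f : BoundedContinuousFunction X ℝ,
      ‖D n f - L f‖ ≤ C / n * ‖f‖ := by
    intro n hn f
    have h1 : Tendsto (fun m => ‖D n f - D m f‖) atTop (𝓝 (‖D n f - L f‖)) :=
      (tendsto_const_nhds.sub (hL f)).norm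
    have h2 : Tendsto (fun m : ℕ => (C / n + C / m) * ‖f‖) atTop (𝓝 ((C / n + 0) * ‖f‖)) :=
      (tendsto_const_nhds.add (tendsto_const_div_atTop_nhds_zero_nat C)).mul tendsto_const_nhds
    have h3 : ∀ᶠ m in atTop, ‖D n f - D m f‖ ≤ (C / n + C / m) * ‖f‖ :=
      eventually_atTop.mpr ⟨N0, fun m hm => hDD n m hn hm f⟩
    have h4 := le_of_tendsto_of_tendsto h1 h2 h3
    simpa using h4
  have hDbd : ∀ n : ℕ, N0 ≤ n → ∀ f : BoundedContinuousFunction X ℝ,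
      ‖D n f‖ ≤ K * t * ‖f‖ := by
    intro n hn f
    obtain ⟨h1, h2⟩ := hN0 n hn
    have hn0 : (0 : ℝ) < n := by exact_mod_cast h1
    rw [hDapp]
    have hns : ‖(n : ℝ) • (T (t / n) f - f)‖ = (n : ℝ) * ‖T (t / n) f - f‖ := by
      have hq := norm_smul (n : ℝ) (T (t / n) f - f)
      rw [Real.norm_eq_abs, abs_of_nonneg (le_of_lt hn0)] at hq
      exact hq
    rw [hns]
    have h5 := hSA (t / n) (by positivity) h2 f
    calc (n : ℝ) * ‖T (t / n) f - f‖ ≤ (n : ℝ) * (K * (t / n) * ‖f‖) :=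
          mul_le_mul_of_nonneg_left h5 (le_of_lt hn0)
      _ = K * t * ‖f‖ := by field_simp
  have hofr : Tendsto (fun n : ℕ => ENNReal.ofReal (C / n)) atTop (𝓝 0) := by
    have h := ENNReal.tendsto_ofReal (tendsto_const_div_atTop_nhds_zero_nat C)
    simpa using h
  constructor
  · -- Cauchy
    intro ε hε
    have hofr2 : Tendsto (fun N : ℕ => ENNReal.ofReal (2 * C / N)) atTop (𝓝 0) := by
      have h := ENNReal.tendsto_ofReal (tendsto_const_div_atTop_nhds_zero_nat (2 * C))
      simpa using h
    have hev2 : ∀ᶠ N : ℕ in atTop, ENNReal.ofReal (2 * C / N) < ε :=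
      hofr2.eventually_lt_const hε
    obtain ⟨N, hN1, hN2⟩ := (hev2.and (eventually_ge_atTop (max N0 1))).exists
    refine ⟨N, fun m hm n hn => ?_⟩
    have hmN0 : N0 ≤ m := le_trans (le_trans (le_max_left N0 1) hN2) hm
    have hnN0 : N0 ≤ n := le_trans (le_trans (le_max_left N0 1) hN2) hn
    have hN1' : 1 ≤ N := le_trans (le_max_right N0 1) hN2
    have hNpos : (0 : ℝ) < (N : ℝ) := by exact_mod_cast hN1'
    have hmpos : (0 : ℝ) < (m : ℝ) := by
      exact_mod_cast Nat.lt_of_lt_of_le Nat.zero_lt_one (le_trans hN1' hm)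
    have hnpos : (0 : ℝ) < (n : ℝ) := by
      exact_mod_cast Nat.lt_of_lt_of_le Nat.zero_lt_one (le_trans hN1' hn)
    have hgoal : (m : ℝ) • (T (t / m) - id) - (n : ℝ) • (T (t / n) - id) = D m - D n := by
      rw [hD]
      simp only [stmt15D]
    rw [hgoal]
    have hband : ∀ f : BoundedContinuousFunction X ℝ, f ≠ 0 →
        ‖(D m - D n) f‖ ≤ (C / m + C / n) * ‖f‖ := by
      intro f _
      rw [Pi.sub_apply]
      exact hDD m n hmN0 hnN0 f
    have h5 := opSemiNorm_le_of_bound (D m - D n) (by positivity) hband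
    refine lt_of_le_of_lt (h5.trans (ENNReal.ofReal_le_ofReal ?_)) hN1
    have e1 : C / (m : ℝ) ≤ C / (N : ℝ) := by
      apply div_le_div_of_nonneg_left hC0 hNpos ?_ |>.trans le_rfl
      exact_mod_cast hm
    have e2 : C / (n : ℝ) ≤ C / (N : ℝ) := by
      apply div_le_div_of_nonneg_left hC0 hNpos ?_ |>.trans le_rfl
      exact_mod_cast hn
    have e3 : 2 * C / (N : ℝ) = C / N + C / N := by ring
    linarith
  · refine ⟨L, ⟨?_, ?_, ?_, ?_⟩, ?_, ?_⟩
    · -- Q1 homogeneity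
      intro c hc f
      have hDc : (fun n => D n (c • f)) = fun n => c • D n f := by
        funext n
        rw [hDapp, hDapp, (hT (t / n) (by positivity)).1 c hc f]
        module
      have h1 := hL (c • f)
      rw [hDc] at h1
      exact tendsto_nhds_unique h1 ((hL f).const_smul c)
    · -- Q2 subadditivity
      intro f g x
      have hevn : ∀ n : ℕ, D n (f + g) x ≤ D n f x + D n g x := by
        intro n
        have hsub := (hT (t / n) (by positivity)).2.1 f g x
        rw [hDx, hDx, hDx]
        have hfg : (f + g) x = f x + g x := rfl
        have hn0 : (0 : ℝ) ≤ (n : ℝ) := by positivity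
        nlinarith [mul_le_mul_of_nonneg_left hsub hn0]
      exact le_of_tendsto_of_tendsto (hLpt (f + g) x) ((hLpt f x).add (hLpt g x))
        (Eventually.of_forall hevn)
    · -- Q3 constants
      intro c
      have hDc : (fun n => D n (BoundedContinuousFunction.const X c)) = fun _ => 0 := by
        funext n
        rw [hDapp, trans_const (hT (t / n) (by positivity)) c]
        simp
      have h1 := hL (BoundedContinuousFunction.const X c)
      rw [hDc] at h1
      exact tendsto_nhds_unique h1 tendsto_const_nhds
    · -- Q4 maximum principle
      intro f x hsup _
      have hevn : ∀ n : ℕ, D n f x ≤ 0 := by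
        intro n
        have hle := (hT (t / n) (by positivity)).2.2 f x
        rw [hsup] at hle
        rw [hDx]
        have hn0 : (0 : ℝ) ≤ (n : ℝ) := by positivity
        nlinarith
      exact le_of_tendsto (hLpt f x) (Eventually.of_forall hevn)
    · -- boundedness
      have hN0pos : (0 : ℝ) < (N0 : ℝ) := by
        exact_mod_cast Nat.lt_of_lt_of_le Nat.zero_lt_one (le_max_left 1 _)
      have hbd : ∀ f : BoundedContinuousFunction X ℝ, f ≠ 0 →
          ‖L f‖ ≤ (K * t + C / N0) * ‖f‖ := by
        intro f _
        have h1 := hrate N0 le_rfl f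
        have h2 := hDbd N0 le_rfl f
        have h3 : ‖L f‖ ≤ ‖D N0 f‖ + ‖D N0 f - L f‖ := by
          have he : L f = D N0 f - (D N0 f - L f) := by abel
          calc ‖L f‖ = ‖D N0 f - (D N0 f - L f)‖ := by rw [← he]
            _ ≤ _ := norm_sub_le _ _
        calc ‖L f‖ ≤ K * t * ‖f‖ + C / N0 * ‖f‖ := by linarith
          _ = (K * t + C / N0) * ‖f‖ := by ring
      have h6 := opSemiNorm_le_of_bound L (by positivity) hbd
      exact ne_top_of_le_ne_top ENNReal.ofReal_ne_top h6
    · -- convergence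
      have hgoal : (fun n : ℕ => opSemiNorm ((n : ℝ) • (T (t / n) - id) - L))
          = fun n : ℕ => opSemiNorm (D n - L) := by
        funext n
        rw [hD]
        simp only [stmt15D]
      rw [hgoal]
      apply tendsto_of_tendsto_of_tendsto_of_le_of_le' tendsto_const_nhds hofr
      · exact Eventually.of_forall fun n => zero_le
      · refine eventually_atTop.mpr ⟨N0, fun n hn => ?_⟩
        refine opSemiNorm_le_of_bound _ (by positivity) fun f _ => ?_
        rw [Pi.sub_apply]
        exact hrate n hn f
end
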